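/- Let G be a graph with at least one edge, over a field k with polynomial ring R on the vertices of G. Then the Castelnuovo–Mumford regularity of the edge ideal I(G) satisfies reg I(G) ≥ inmat(G) + 1, where inmat(G) is the induced matching number of G. -/

import Mathlib

open MvPolynomial

noncomputable section

namespace CMReg

variable {k : Type*} [Field k] {σ : Type*} [Fintype σ] [DecidableEq σ] [LinearOrder σ]

/-- The degree-`d` homogeneous component of an ideal `I` of `k[x_s : s ∈ σ]`, as a
`k`-vector space (`⊥` for negative `d`). -/
def degComp (I : Ideal (MvPolynomial σ k)) (d : ℤ) : Submodule k (MvPolynomial σ k) :=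
  if 0 ≤ d then I.restrictScalars k ⊓ homogeneousSubmodule σ k d.toNat else ⊥

lemma mulX_mem (I : Ideal (MvPolynomial σ k)) (a : σ) (d : ℤ) (m : MvPolynomial σ k)
    (hm : m ∈ degComp I d) : X a * m ∈ degComp I (d + 1) := by
  unfold degComp at *
  split_ifs at hm with h
  · rw [if_pos (by omega)]
    rw [Submodule.mem_inf] at hm
    obtain ⟨h1, h2⟩ := hm
    rw [Submodule.mem_inf]
    refine ⟨I.mul_mem_left _ h1, ?_⟩
    rw [mem_homogeneousSubmodule] at h2 ⊢
    have e : (d + 1).toNat = 1 + d.toNat := by omega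
    rw [e]
    exact (isHomogeneous_X k a).mul h2
  · simp only [Submodule.mem_bot] at hm
    subst hm
    rw [mul_zero]
    exact zero_mem _

/-- The internal-degree-`j` strand of the Koszul complex `K(x₁,...,xₙ) ⊗ I` in homological
degree `i`: a direct sum of copies of the degree-`(j - i)` component of `I`, indexed by the
`i`-element subsets of the variables (the basis of `Λⁱ`). -/
abbrev KD (I : Ideal (MvPolynomial σ k)) (i j : ℕ) : Type _ :=
  {S : Finset σ // S.card = i} → degComp I ((j : ℤ) - i)

/-- The Koszul differential `K_{i+1} → K_i` in internal degree `j`: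
`(d f)(S) = ∑_{a ∉ S} (-1)^{|{b ∈ S : b < a}|} xₐ · f(S ∪ {a})`. -/
def kdiff (I : Ideal (MvPolynomial σ k)) (i j : ℕ) : KD I (i + 1) j →ₗ[k] KD I i j where
  toFun f S := ∑ a ∈ S.1ᶜ.attach,
    ((-1 : k) ^ (S.1.filter (fun b => b < a.1)).card) •
      (⟨X a.1 * (f ⟨insert a.1 S.1, by
          rw [Finset.card_insert_of_notMem (Finset.mem_compl.mp a.2), S.2]⟩ : _).1, by
        have h := mulX_mem I a.1 _ _ (f ⟨insert a.1 S.1, by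
          rw [Finset.card_insert_of_notMem (Finset.mem_compl.mp a.2), S.2]⟩).2
        rwa [show ((j : ℤ) - (i + 1 : ℕ)) + 1 = (j : ℤ) - i by push_cast; ring] at h⟩ :
        degComp I ((j : ℤ) - i))
  map_add' f g := by
    funext S
    rw [Pi.add_apply, ← Finset.sum_add_distrib]
    refine Finset.sum_congr rfl (fun a _ => ?_)
    rw [← smul_add]
    congr 1
    apply Subtype.ext
    simp [mul_add]
  map_smul' c f := by
    funext S
    rw [RingHom.id_apply, Pi.smul_apply, Finset.smul_sum]
    refine Finset.sum_congr rfl (fun a _ => ?_)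
    rw [smul_comm]
    congr 1
    apply Subtype.ext
    simp [mul_smul_comm]

/-- The cycles of the degree-`j` strand of the Koszul complex at homological degree `i`. -/
def cyclesAt (I : Ideal (MvPolynomial σ k)) (i j : ℕ) : Submodule k (KD I i j) :=
  match i with
  | 0 => ⊤
  | (i' + 1) => LinearMap.ker (kdiff I i' j)

/-- The graded Betti number `β_{ij}(I) = dim_k Tor_i(k, I)_j`, computed as the dimension of
the homology of the degree-`j` strand of `K(x) ⊗ I` at homological degree `i`. -/
def bettiNum (I : Ideal (MvPolynomial σ k)) (i j : ℕ) : ℕ :=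
  Module.finrank k (cyclesAt I i j) - Module.finrank k (LinearMap.range (kdiff I i j))

/-- The Castelnuovo–Mumford regularity `reg I = sup { j - i : β_{ij}(I) ≠ 0 }` of an ideal
of the polynomial ring, as an element of `ℕ∞`. -/
def reg (I : Ideal (MvPolynomial σ k)) : ℕ∞ :=
  sSup {d : ℕ∞ | ∃ i j : ℕ, bettiNum I i j ≠ 0 ∧ ((j - i : ℕ) : ℕ∞) = d}

end CMReg

/-- `M` is an induced matching of `G`: a set of pairwise vertex-disjoint edges of `G` such
that the only edges of `G` between vertices covered by `M` are the edges of `M` themselves. -/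
def SimpleGraph.IsInducedMatching {V : Type*} (G : SimpleGraph V) (M : Finset (Sym2 V)) : Prop :=
  (↑M : Set (Sym2 V)) ⊆ G.edgeSet ∧
  (∀ e ∈ M, ∀ f ∈ M, e ≠ f → ∀ u : V, u ∈ e → u ∉ f) ∧
  (∀ u v : V, (∃ e ∈ M, u ∈ e) → (∃ f ∈ M, v ∈ f) → G.Adj u v → s(u, v) ∈ M)

/-- The induced matching number of `G`: the largest size of an induced matching. -/
noncomputable def SimpleGraph.inducedMatchingNumber {V : Type*} (G : SimpleGraph V) : ℕ :=
  sSup {n : ℕ | ∃ M : Finset (Sym2 V), G.IsInducedMatching M ∧ M.card = n}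

/-- The edge ideal of a graph `G`: the ideal of `k[x_v : v ∈ V]` generated by the products
`x_u x_v` over the edges `{u, v}` of `G`. -/
def edgeIdeal (k : Type*) [Field k] {V : Type*} (G : SimpleGraph V) :
    Ideal (MvPolynomial V k) :=
  Ideal.span {p | ∃ u v : V, G.Adj u v ∧ p = MvPolynomial.X u * MvPolynomial.X v}

namespace CMRegAux
set_option linter.unusedSectionVars false

variable {k : Type*} [Field k] {V : Type*} [Fintype V] [DecidableEq V] [LinearOrder V]

def xF (k : Type*) [Field k] (T : Finset V) : MvPolynomial V k := ∏ w ∈ T, X w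

def iexp (T : Finset V) : V →₀ ℕ := ∑ w ∈ T, Finsupp.single w 1

lemma iexp_apply (T : Finset V) (x : V) : iexp T x = if x ∈ T then 1 else 0 := by
  classical
  rw [iexp, Finsupp.finset_sum_apply]
  simp [Finsupp.single_apply]

lemma support_iexp (T : Finset V) : (iexp T).support = T := by
  ext x
  rw [Finsupp.mem_support_iff, iexp_apply]
  split <;> simp_all

lemma iexp_insert (a : V) (T : Finset V) (ha : a ∉ T) :
    iexp (insert a T) = Finsupp.single a 1 + iexp T := by
  rw [iexp, Finset.sum_insert ha]; rfl

lemma iexp_sub_single (x : V) (T : Finset V) (hx : x ∈ T) :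
    iexp T - Finsupp.single x 1 = iexp (T.erase x) := by
  have h : T = insert x (T.erase x) := (Finset.insert_erase hx).symm
  rw [h, iexp_insert x _ (Finset.notMem_erase x T), add_tsub_cancel_left,
    Finset.erase_insert (Finset.notMem_erase x T)]

lemma xF_eq_monomial (T : Finset V) : xF k T = monomial (iexp T) 1 := by
  classical
  induction T using Finset.induction_on with
  | empty => simp [xF, iexp]
  | insert _ _ ha =>
    rename_i a T ih
    rw [xF, Finset.prod_insert ha, ← xF, ih, iexp_insert a T ha, X, monomial_mul, one_mul]

lemma coeff_xF_self (T : Finset V) : coeff (iexp T) (xF k T) = 1 := by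
  rw [xF_eq_monomial, coeff_monomial, if_pos rfl]

lemma isHomogeneous_xF (T : Finset V) : (xF k T).IsHomogeneous T.card := by
  classical
  induction T using Finset.induction_on with
  | empty => simpa [xF] using isHomogeneous_one V k
  | insert _ _ ha =>
    rename_i a T ih
    rw [xF, Finset.prod_insert ha, ← xF, Finset.card_insert_of_notMem ha, add_comm]
    exact (isHomogeneous_X k a).mul ih

def cnt (S : Finset V) (a : V) : ℕ := (S.filter (fun b => b < a)).card

lemma cnt_insert (a b : V) (S : Finset V) (ha : a ∉ S) :
    cnt (insert a S) b = cnt S b + if a < b then 1 else 0 := by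
  unfold cnt
  rw [Finset.filter_insert]
  split_ifs with h
  · rw [Finset.card_insert_of_notMem (fun hc => ha (Finset.mem_of_mem_filter a hc))]
  · rw [add_zero]

lemma sign_swap (a b : V) (S : Finset V) (hab : a ≠ b) (ha : a ∉ S) (hb : b ∉ S) :
    ((-1 : k) ^ cnt S a) * (-1 : k) ^ cnt (insert a S) b
      = -(((-1 : k) ^ cnt S b) * (-1 : k) ^ cnt (insert b S) a) := by
  rw [← pow_add, ← pow_add]
  rcases hab.lt_or_gt with h | h
  · have e : cnt S a + cnt (insert a S) b = (cnt S b + cnt (insert b S) a) + 1 := by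
      rw [cnt_insert a b S ha, cnt_insert b a S hb, if_pos h, if_neg (not_lt.mpr h.le)]
      omega
    rw [e, pow_succ]
    ring
  · have e : cnt S b + cnt (insert b S) a = (cnt S a + cnt (insert a S) b) + 1 := by
      rw [cnt_insert a b S ha, cnt_insert b a S hb, if_pos h, if_neg (not_lt.mpr h.le)]
      omega
    rw [e, pow_succ]
    ring

def DD (f : Finset V → MvPolynomial V k) (S : Finset V) : MvPolynomial V k :=
  ∑ a ∈ Sᶜ, ((-1 : k) ^ cnt S a) • (X a * f (insert a S))

lemma DD_DD (f : Finset V → MvPolynomial V k) (S : Finset V) : DD (DD f) S = 0 := by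
  unfold DD
  have step : ∀ a ∈ Sᶜ,
      ((-1 : k) ^ cnt S a) • (X a * ∑ b ∈ (insert a S)ᶜ,
          ((-1 : k) ^ cnt (insert a S) b) • (X b * f (insert b (insert a S))))
        = ∑ b ∈ (insert a S)ᶜ,
            (((-1 : k) ^ cnt S a) * (-1 : k) ^ cnt (insert a S) b) •
              (X a * (X b * f (insert b (insert a S)))) := by
    intro a _
    rw [Finset.mul_sum, Finset.smul_sum]
    refine Finset.sum_congr rfl fun b _ => ?_
    rw [mul_smul_comm, smul_smul]
  rw [Finset.sum_congr rfl step, Finset.sum_sigma']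
  refine Finset.sum_involution (fun p _ => ⟨p.2, p.1⟩) ?_ ?_ ?_ ?_
  · rintro ⟨a, b⟩ hp
    simp only [Finset.mem_sigma, Finset.compl_insert, Finset.mem_erase, Finset.mem_compl] at hp
    obtain ⟨ha, hba, hb⟩ := hp
    have hab : a ≠ b := fun h => hba h.symm
    have key := sign_swap (k := k) a b S hab ha hb
    dsimp only
    rw [Finset.insert_comm b a S, mul_left_comm (X b) (X a), key, neg_smul]
    exact neg_add_cancel _
  · rintro ⟨a, b⟩ hp _
    simp only [Finset.mem_sigma, Finset.compl_insert, Finset.mem_erase, Finset.mem_compl] at hp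
    intro h
    exact hp.2.1 (congrArg Sigma.fst h)
  · rintro ⟨a, b⟩ hp
    simp only [Finset.mem_sigma, Finset.compl_insert, Finset.mem_erase, Finset.mem_compl] at hp ⊢
    obtain ⟨ha, hba, hb⟩ := hp
    exact ⟨hb, fun h => hba h.symm, ha⟩
  · rintro ⟨a, b⟩ _
    rfl

end CMRegAux

namespace CMRegAux

variable {k : Type*} [Field k] {V : Type*} [Fintype V] [DecidableEq V] [LinearOrder V]

def liftF (I : Ideal (MvPolynomial V k)) (i j : ℕ) (f : CMReg.KD I (i + 1) j) :
    Finset V → MvPolynomial V k :=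
  fun T => if h : T.card = i + 1 then ((f ⟨T, h⟩ : CMReg.degComp I ((j : ℤ) - (i + 1 : ℕ))) :
    MvPolynomial V k) else 0

lemma kdiff_val (I : Ideal (MvPolynomial V k)) (i j : ℕ) (f : CMReg.KD I (i + 1) j)
    (S : {S : Finset V // S.card = i}) :
    ((CMReg.kdiff I i j f S : CMReg.degComp I ((j : ℤ) - i)) : MvPolynomial V k)
      = DD (liftF I i j f) S.1 := by
  rw [CMReg.kdiff]
  dsimp only [LinearMap.coe_mk, AddHom.coe_mk]
  rw [AddSubmonoidClass.coe_finset_sum, DD,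
    ← Finset.sum_attach (S.1ᶜ) (fun a => ((-1 : k) ^ cnt S.1 a) • (X a * liftF I i j f (insert a S.1)))]
  refine Finset.sum_congr rfl fun a _ => ?_
  rw [SetLike.val_smul, liftF]
  rw [dif_pos (by rw [Finset.card_insert_of_notMem (Finset.mem_compl.mp a.2), S.2])]
  rfl

lemma kdiff_kdiff (I : Ideal (MvPolynomial V k)) (i j : ℕ) (f : CMReg.KD I (i + 2) j) :
    CMReg.kdiff I i j (CMReg.kdiff I (i + 1) j f) = 0 := by
  funext S
  apply Subtype.ext
  rw [kdiff_val]
  have h1 : liftF I i j (CMReg.kdiff I (i + 1) j f) = DD (liftF I (i + 1) j f) := by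
    funext T
    rw [liftF]
    split_ifs with h
    · exact kdiff_val I (i + 1) j f ⟨T, h⟩
    · symm
      rw [DD]
      apply Finset.sum_eq_zero
      intro a ha
      rw [liftF, dif_neg, mul_zero, smul_zero]
      rw [Finset.card_insert_of_notMem (Finset.mem_compl.mp ha)]
      omega
  rw [h1, DD_DD]
  rfl

lemma range_kdiff_le_cyclesAt (I : Ideal (MvPolynomial V k)) (i j : ℕ) :
    LinearMap.range (CMReg.kdiff I i j) ≤ CMReg.cyclesAt I i j := by
  cases i with
  | zero => exact le_top
  | succ m =>
    rintro x ⟨y, rfl⟩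
    show _ ∈ LinearMap.ker (CMReg.kdiff I m j)
    rw [LinearMap.mem_ker]
    exact kdiff_kdiff I m j y

lemma degComp_le_restrict (I : Ideal (MvPolynomial V k)) (d : ℤ) :
    CMReg.degComp I d ≤ restrictTotalDegree V k d.toNat := by
  rw [CMReg.degComp]
  split_ifs
  · intro x hx
    rw [mem_restrictTotalDegree]
    exact ((mem_homogeneousSubmodule _ _).mp hx.2).totalDegree_le
  · intro x hx
    simp only [Submodule.mem_bot] at hx
    subst hx
    exact zero_mem _

instance degComp_findim (I : Ideal (MvPolynomial V k)) (d : ℤ) :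
    FiniteDimensional k (CMReg.degComp I d) :=
  Submodule.finiteDimensional_of_le (degComp_le_restrict I d)

instance KD_findim (I : Ideal (MvPolynomial V k)) (i j : ℕ) :
    FiniteDimensional k (CMReg.KD I i j) := by
  unfold CMReg.KD
  infer_instance

lemma mem_I_of_degComp {I : Ideal (MvPolynomial V k)} {d : ℤ} {x : MvPolynomial V k}
    (hx : x ∈ CMReg.degComp I d) : x ∈ I := by
  rw [CMReg.degComp] at hx
  split_ifs at hx
  · exact hx.1
  · simp only [Submodule.mem_bot] at hx
    subst hx
    exact zero_mem _

end CMRegAux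


namespace CMRegAux

variable {V : Type*} [Fintype V] [DecidableEq V] [LinearOrder V]

structure MS (V : Type*) [DecidableEq V] (G : SimpleGraph V) where
  M : Finset (Sym2 V)
  e₀ : Sym2 V
  he₀ : e₀ ∈ M
  uu : Sym2 V → V
  vv : Sym2 V → V
  hadj : ∀ e ∈ M, G.Adj (uu e) (vv e)
  humem : ∀ e ∈ M, uu e ∈ e
  hvmem : ∀ e ∈ M, vv e ∈ e
  hdisj : ∀ e ∈ M, ∀ f ∈ M, e ≠ f → ∀ x ∈ e, x ∉ f
  hind : ∀ u v : V, (∃ e ∈ M, u ∈ e) → (∃ f ∈ M, v ∈ f) → G.Adj u v → s(u, v) ∈ M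

variable {G : SimpleGraph V} (T : MS V G)

namespace MS

lemma eq_of_mem_mem {e f : Sym2 V} (he : e ∈ T.M) (hf : f ∈ T.M) {x : V} (hxe : x ∈ e)
    (hxf : x ∈ f) : e = f := by
  by_contra h
  exact T.hdisj e he f hf h x hxe hxf

lemma ne_of_edges {d e : Sym2 V} {x y : V} (hd : d ∈ T.M) (he : e ∈ T.M) (hde : d ≠ e)
    (hx : x ∈ d) (hy : y ∈ e) : x ≠ y :=
  fun h => hde (T.eq_of_mem_mem hd he hx (h ▸ hy))

def E : Finset (Sym2 V) := T.M.erase T.e₀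

lemma E_subset : T.E ⊆ T.M := Finset.erase_subset _ _

lemma e₀_not_mem_E : T.e₀ ∉ T.E := Finset.notMem_erase _ _

lemma M_eq : T.M = insert T.e₀ T.E := (Finset.insert_erase T.he₀).symm

lemma ne_e₀_of_mem_E {e : Sym2 V} (he : e ∈ T.E) : e ≠ T.e₀ :=
  fun h => T.e₀_not_mem_E (h ▸ he)

def pk (A : Finset (Sym2 V)) (e : Sym2 V) : V := if e ∈ A then T.vv e else T.uu e

def ak (A : Finset (Sym2 V)) (e : Sym2 V) : V := if e ∈ A then T.uu e else T.vv e

lemma pk_mem (A : Finset (Sym2 V)) {e : Sym2 V} (he : e ∈ T.M) : T.pk A e ∈ e := by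
  rw [pk]; split_ifs; exacts [T.hvmem e he, T.humem e he]

lemma ak_mem (A : Finset (Sym2 V)) {e : Sym2 V} (he : e ∈ T.M) : T.ak A e ∈ e := by
  rw [ak]; split_ifs; exacts [T.humem e he, T.hvmem e he]

lemma pk_ne_ak (A : Finset (Sym2 V)) {e : Sym2 V} (he : e ∈ T.M) : T.pk A e ≠ T.ak A e := by
  rw [pk, ak]; split_ifs
  exacts [(T.hadj e he).ne', (T.hadj e he).ne]

lemma pk_injOn (A : Finset (Sym2 V)) : ∀ d ∈ T.E, ∀ e ∈ T.E, T.pk A d = T.pk A e → d = e :=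
  fun d hd e he h => T.eq_of_mem_mem (T.E_subset hd) (T.E_subset he) (T.pk_mem A (T.E_subset hd))
    (h ▸ T.pk_mem A (T.E_subset he))

lemma ak_injOn (A : Finset (Sym2 V)) : ∀ d ∈ T.E, ∀ e ∈ T.E, T.ak A d = T.ak A e → d = e :=
  fun d hd e he h => T.eq_of_mem_mem (T.E_subset hd) (T.E_subset he) (T.ak_mem A (T.E_subset hd))
    (h ▸ T.ak_mem A (T.E_subset he))

def SA (A : Finset (Sym2 V)) : Finset V := T.E.image (T.pk A)

def CS (A : Finset (Sym2 V)) : Finset V :=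
  insert (T.uu T.e₀) (insert (T.vv T.e₀) (T.E.image (T.ak A)))

def NA (A : Finset (Sym2 V)) : ℕ :=
  ((T.E ×ˢ T.E).filter (fun p => T.uu p.1 < T.uu p.2 ∧ T.pk A p.2 < T.pk A p.1)).card

def U₀ : Finset V := T.M.image T.uu

def coU : Finset V := T.M.image T.vv

lemma card_SA (A : Finset (Sym2 V)) : (T.SA A).card = T.E.card :=
  Finset.card_image_of_injOn (fun d hd e he => T.pk_injOn A d hd e he)

lemma card_coU : T.coU.card = T.M.card :=
  Finset.card_image_of_injOn (fun d hd e he h =>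
    T.eq_of_mem_mem hd he (T.hvmem d hd) (h ▸ T.hvmem e he))

lemma uu_e₀_not_mem_SA (A : Finset (Sym2 V)) : T.uu T.e₀ ∉ T.SA A := by
  rw [SA, Finset.mem_image]
  rintro ⟨e, he, h⟩
  exact T.ne_of_edges (T.E_subset he) T.he₀ (T.ne_e₀_of_mem_E he)
    (T.pk_mem A (T.E_subset he)) (T.humem _ T.he₀) h

lemma vv_e₀_not_mem_SA (A : Finset (Sym2 V)) : T.vv T.e₀ ∉ T.SA A := by
  rw [SA, Finset.mem_image]
  rintro ⟨e, he, h⟩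
  exact T.ne_of_edges (T.E_subset he) T.he₀ (T.ne_e₀_of_mem_E he)
    (T.pk_mem A (T.E_subset he)) (T.hvmem _ T.he₀) h

lemma ak_not_mem_SA (A : Finset (Sym2 V)) {e' : Sym2 V} (he' : e' ∈ T.E) :
    T.ak A e' ∉ T.SA A := by
  rw [SA, Finset.mem_image]
  rintro ⟨d, hd, h⟩
  rcases eq_or_ne d e' with rfl | hne
  · exact T.pk_ne_ak A (T.E_subset hd) h
  · exact T.ne_of_edges (T.E_subset hd) (T.E_subset he') hne
      (T.pk_mem A (T.E_subset hd)) (T.ak_mem A (T.E_subset he')) h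

lemma uu_e₀_not_mem_akimage (A : Finset (Sym2 V)) : T.uu T.e₀ ∉ T.E.image (T.ak A) := by
  rw [Finset.mem_image]
  rintro ⟨e, he, h⟩
  exact T.ne_of_edges (T.E_subset he) T.he₀ (T.ne_e₀_of_mem_E he)
    (T.ak_mem A (T.E_subset he)) (T.humem _ T.he₀) h

lemma vv_e₀_not_mem_akimage (A : Finset (Sym2 V)) : T.vv T.e₀ ∉ T.E.image (T.ak A) := by
  rw [Finset.mem_image]
  rintro ⟨e, he, h⟩
  exact T.ne_of_edges (T.E_subset he) T.he₀ (T.ne_e₀_of_mem_E he)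
    (T.ak_mem A (T.E_subset he)) (T.hvmem _ T.he₀) h

lemma uu_e₀_ne_vv_e₀ : T.uu T.e₀ ≠ T.vv T.e₀ := (T.hadj _ T.he₀).ne

lemma uu_e₀_not_mem_insert (A : Finset (Sym2 V)) :
    T.uu T.e₀ ∉ insert (T.vv T.e₀) (T.E.image (T.ak A)) := by
  rw [Finset.mem_insert]
  rintro (h | h)
  exacts [T.uu_e₀_ne_vv_e₀ h, T.uu_e₀_not_mem_akimage A h]

lemma CS_subset_compl (A : Finset (Sym2 V)) : T.CS A ⊆ (T.SA A)ᶜ := by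
  intro x hx
  rw [Finset.mem_compl]
  rw [CS, Finset.mem_insert, Finset.mem_insert, Finset.mem_image] at hx
  rcases hx with rfl | rfl | ⟨e, he, rfl⟩
  exacts [T.uu_e₀_not_mem_SA A, T.vv_e₀_not_mem_SA A, T.ak_not_mem_SA A he]

section Flip

variable {A : Finset (Sym2 V)} {e' : Sym2 V}

lemma pk_self (heA : e' ∉ A) : T.pk A e' = T.uu e' := if_neg heA

lemma ak_self (heA : e' ∉ A) : T.ak A e' = T.vv e' := if_neg heA

lemma pk_insert_self : T.pk (insert e' A) e' = T.vv e' := if_pos (Finset.mem_insert_self _ _)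

lemma ak_insert_self : T.ak (insert e' A) e' = T.uu e' := if_pos (Finset.mem_insert_self _ _)

lemma pk_insert_of_ne {d : Sym2 V} (hd : d ≠ e') : T.pk (insert e' A) d = T.pk A d := by
  by_cases h : d ∈ A <;> simp [pk, h, hd]

lemma ak_insert_of_ne {d : Sym2 V} (hd : d ≠ e') : T.ak (insert e' A) d = T.ak A d := by
  by_cases h : d ∈ A <;> simp [ak, h, hd]

lemma SA_eq (he' : e' ∈ T.E) (heA : e' ∉ A) : T.SA A = insert (T.uu e') ((T.E.erase e').image (T.pk A)) := by
  rw [SA, ← Finset.insert_erase he', Finset.image_insert, T.pk_self heA,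
    Finset.erase_insert (Finset.notMem_erase _ _)]

lemma SA_insert_eq (he' : e' ∈ T.E) :
    T.SA (insert e' A) = insert (T.vv e') ((T.E.erase e').image (T.pk A)) := by
  rw [SA, ← Finset.insert_erase he', Finset.image_insert, T.pk_insert_self,
    Finset.erase_insert (Finset.notMem_erase _ _)]
  congr 1
  exact Finset.image_congr (fun d hd => T.pk_insert_of_ne (Finset.ne_of_mem_erase hd))

lemma insert_ak_SA_eq (he' : e' ∈ T.E) (heA : e' ∉ A) :
    insert (T.ak A e') (T.SA A) = insert (T.ak (insert e' A) e') (T.SA (insert e' A)) := by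
  rw [T.ak_self heA, T.ak_insert_self, T.SA_eq he' heA, T.SA_insert_eq he']
  exact Finset.insert_comm _ _ _

lemma akimage_eq (he' : e' ∈ T.E) (heA : e' ∉ A) : T.E.image (T.ak A) = insert (T.vv e') ((T.E.erase e').image (T.ak A)) := by
  rw [← Finset.insert_erase he', Finset.image_insert, T.ak_self heA,
    Finset.erase_insert (Finset.notMem_erase _ _)]

lemma akimage_insert_eq (he' : e' ∈ T.E) :
    T.E.image (T.ak (insert e' A)) = insert (T.uu e') ((T.E.erase e').image (T.ak A)) := by
  rw [← Finset.insert_erase he', Finset.image_insert, T.ak_insert_self,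
    Finset.erase_insert (Finset.notMem_erase _ _)]
  congr 1
  exact Finset.image_congr (fun d hd => T.ak_insert_of_ne (Finset.ne_of_mem_erase hd))

lemma vv_not_mem_erase_akimage (he' : e' ∈ T.E) : T.vv e' ∉ (T.E.erase e').image (T.ak A) := by
  rw [Finset.mem_image]
  rintro ⟨d, hd, h⟩
  exact T.ne_of_edges (T.E_subset (Finset.mem_of_mem_erase hd)) (T.E_subset he')
    (Finset.ne_of_mem_erase hd) (T.ak_mem A (T.E_subset (Finset.mem_of_mem_erase hd)))
    (T.hvmem _ (T.E_subset he')) h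

lemma uu_not_mem_erase_akimage (he' : e' ∈ T.E) : T.uu e' ∉ (T.E.erase e').image (T.ak A) := by
  rw [Finset.mem_image]
  rintro ⟨d, hd, h⟩
  exact T.ne_of_edges (T.E_subset (Finset.mem_of_mem_erase hd)) (T.E_subset he')
    (Finset.ne_of_mem_erase hd) (T.ak_mem A (T.E_subset (Finset.mem_of_mem_erase hd)))
    (T.humem _ (T.E_subset he')) h

lemma CS_erase_eq (he' : e' ∈ T.E) (heA : e' ∉ A) :
    (T.CS A).erase (T.ak A e') =
      insert (T.uu T.e₀) (insert (T.vv T.e₀) ((T.E.erase e').image (T.ak A))) := by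
  rw [CS, T.akimage_eq he' heA, T.ak_self heA]
  have h1 : T.vv e' ≠ T.uu T.e₀ :=
    T.ne_of_edges (T.E_subset he') T.he₀ (T.ne_e₀_of_mem_E he') (T.hvmem _ (T.E_subset he'))
      (T.humem _ T.he₀)
  have h2 : T.vv e' ≠ T.vv T.e₀ :=
    T.ne_of_edges (T.E_subset he') T.he₀ (T.ne_e₀_of_mem_E he') (T.hvmem _ (T.E_subset he'))
      (T.hvmem _ T.he₀)
  rw [Finset.erase_insert_of_ne h1.symm, Finset.erase_insert_of_ne h2.symm,
    Finset.erase_insert (T.vv_not_mem_erase_akimage he')]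

lemma CS_erase_insert_eq (he' : e' ∈ T.E) :
    (T.CS (insert e' A)).erase (T.ak (insert e' A) e') =
      insert (T.uu T.e₀) (insert (T.vv T.e₀) ((T.E.erase e').image (T.ak A))) := by
  rw [CS, T.akimage_insert_eq he', T.ak_insert_self]
  have h1 : T.uu e' ≠ T.uu T.e₀ :=
    T.ne_of_edges (T.E_subset he') T.he₀ (T.ne_e₀_of_mem_E he') (T.humem _ (T.E_subset he'))
      (T.humem _ T.he₀)
  have h2 : T.uu e' ≠ T.vv T.e₀ :=
    T.ne_of_edges (T.E_subset he') T.he₀ (T.ne_e₀_of_mem_E he') (T.humem _ (T.E_subset he'))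
      (T.hvmem _ T.he₀)
  rw [Finset.erase_insert_of_ne h1.symm, Finset.erase_insert_of_ne h2.symm,
    Finset.erase_insert (T.uu_not_mem_erase_akimage he')]

end Flip

end MS

end CMRegAux


namespace CMRegAux

section D1

variable {V : Type*} [Fintype V] [DecidableEq V] [LinearOrder V]
variable {k : Type*} [Field k] {G : SimpleGraph V}

lemma coeff_edgeIdeal_zero {q : MvPolynomial V k} (hq : q ∈ edgeIdeal k G) (m : V →₀ ℕ)
    (hm : ∀ u v : V, G.Adj u v → ¬(Finsupp.single u 1 + Finsupp.single v 1 ≤ m)) :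
    MvPolynomial.coeff m q = 0 := by
  have main : ∀ m' ≤ m, coeff m' q = 0 := by
    rw [edgeIdeal] at hq
    refine Submodule.span_induction ?_ ?_ ?_ ?_ hq
    · rintro x ⟨u, v, huv, rfl⟩ m' hm'
      have hx : (X u * X v : MvPolynomial V k)
          = monomial (Finsupp.single u 1 + Finsupp.single v 1) 1 := by
        rw [X, X, monomial_mul, one_mul]
      rw [hx, coeff_monomial]
      split_ifs with h
      · exact absurd (h ▸ hm') (hm u v huv)
      · rfl
    · intro m' _
      exact coeff_zero m'
    · intro x y _ _ ihx ihy m' hm'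
      rw [coeff_add, ihx m' hm', ihy m' hm', add_zero]
    · intro a x _ ih m' hm'
      rw [smul_eq_mul, coeff_mul]
      apply Finset.sum_eq_zero
      rintro ⟨m1, m2⟩ hp
      rw [Finset.HasAntidiagonal.mem_antidiagonal] at hp
      rw [ih m2 (le_trans (hp ▸ self_le_add_left m2 m1) hm'), mul_zero]
  exact main m le_rfl

lemma coeff_iexp_zero (T : MS V G) (B : Finset V)
    (hBmem : ∀ x ∈ B, ∃ e ∈ T.M, x ∈ e)
    (hrep : ∀ e ∈ T.M, ∀ x ∈ B, ∀ y ∈ B, x ∈ e → y ∈ e → x = y)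
    {q : MvPolynomial V k} (hq : q ∈ edgeIdeal k G) : coeff (iexp B) q = 0 := by
  apply coeff_edgeIdeal_zero hq
  intro u v huv hle
  have key : ∀ w, (Finsupp.single u 1 + Finsupp.single v 1 : V →₀ ℕ) w ≠ 0 → w ∈ B := by
    intro w hw
    have h2 := (Finsupp.le_def.mp hle) w
    rw [iexp_apply] at h2
    by_contra hB
    rw [if_neg hB] at h2
    omega
  have hu : u ∈ B := key u (by rw [Finsupp.add_apply, Finsupp.single_eq_same]; omega)
  have hv : v ∈ B := key v (by rw [Finsupp.add_apply, Finsupp.single_eq_same]; omega)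
  have hsv := T.hind u v (hBmem u hu) (hBmem v hv) huv
  exact huv.ne (hrep _ hsv u hu v hv (Sym2.mem_mk_left u v) (Sym2.mem_mk_right u v))

end D1

section D2

variable {V : Type*} [Fintype V] [DecidableEq V] [LinearOrder V]
variable {G : SimpleGraph V} (T : MS V G)

lemma cnt_SA (A : Finset (Sym2 V)) (x : V) :
    cnt (T.SA A) x = ∑ e ∈ T.E, if T.pk A e < x then 1 else 0 := by
  rw [cnt, MS.SA, Finset.filter_image,
    Finset.card_image_of_injOn (fun d hd e he h =>
      T.pk_injOn A d (Finset.mem_of_mem_filter d hd) e (Finset.mem_of_mem_filter e he) h),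
    Finset.card_filter]

lemma NA_sum (A : Finset (Sym2 V)) :
    T.NA A = ∑ d ∈ T.E, ∑ e ∈ T.E,
      if T.uu d < T.uu e ∧ T.pk A e < T.pk A d then 1 else 0 := by
  rw [MS.NA, Finset.card_filter, Finset.sum_product]

lemma zmod_two_add_self (x : ZMod 2) : x + x = 0 := by
  rw [← two_mul, show (2 : ZMod 2) = 0 from rfl, zero_mul]

lemma cast_sum_ite {α : Type*} (s : Finset α) (p : α → Prop) [DecidablePred p] :
    ((∑ x ∈ s, if p x then 1 else 0 : ℕ) : ZMod 2) = ∑ x ∈ s, if p x then (1 : ZMod 2) else 0 := by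
  push_cast
  refine Finset.sum_congr rfl fun x _ => ?_
  split_ifs <;> simp

lemma cast_sum_sum_ite {α : Type*} (s t : Finset α) (p : α → α → Prop)
    [∀ a b, Decidable (p a b)] :
    ((∑ x ∈ s, ∑ y ∈ t, if p x y then 1 else 0 : ℕ) : ZMod 2)
      = ∑ x ∈ s, ∑ y ∈ t, if p x y then (1 : ZMod 2) else 0 := by
  push_cast
  refine Finset.sum_congr rfl fun x _ => Finset.sum_congr rfl fun y _ => ?_
  split_ifs <;> simp

lemma parity (A : Finset (Sym2 V)) {e' : Sym2 V} (he' : e' ∈ T.E) (heA : e' ∉ A) :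
    Odd (T.NA A + cnt (T.SA A) (T.vv e')
      + (T.NA (insert e' A) + cnt (T.SA (insert e' A)) (T.uu e'))) := by
  classical
  have he'M : e' ∈ T.M := T.E_subset he'
  set w : V := T.uu e' with hw_def
  set w' : V := T.vv e' with hw'_def
  set E' : Finset (Sym2 V) := T.E.erase e' with hE'_def
  have hmemE : ∀ d ∈ E', d ∈ T.M := fun d hd => T.E_subset (Finset.mem_of_mem_erase hd)
  have hneE : ∀ d ∈ E', d ≠ e' := fun d hd => Finset.ne_of_mem_erase hd
  have hkey : ∀ d ∈ E', T.uu d ≠ w := fun d hd =>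
    T.ne_of_edges (hmemE d hd) he'M (hneE d hd) (T.humem _ (hmemE d hd)) (T.humem _ he'M)
  have hpw : ∀ d ∈ E', T.pk A d ≠ w := fun d hd =>
    T.ne_of_edges (hmemE d hd) he'M (hneE d hd) (T.pk_mem A (hmemE d hd)) (T.humem _ he'M)
  have hpw' : ∀ d ∈ E', T.pk A d ≠ w' := fun d hd =>
    T.ne_of_edges (hmemE d hd) he'M (hneE d hd) (T.pk_mem A (hmemE d hd)) (T.hvmem _ he'M)
  have hpkE' : ∀ d ∈ E', T.pk (insert e' A) d = T.pk A d := fun d hd =>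
    T.pk_insert_of_ne (hneE d hd)
  set f : Sym2 V → Sym2 V → ZMod 2 :=
    fun d e => if T.uu d < T.uu e ∧ T.pk A e < T.pk A d then 1 else 0 with hf_def
  set f' : Sym2 V → Sym2 V → ZMod 2 :=
    fun d e => if T.uu d < T.uu e ∧ T.pk (insert e' A) e < T.pk (insert e' A) d then 1 else 0
    with hf'_def
  have castNA : (T.NA A : ZMod 2) = ∑ d ∈ T.E, ∑ e ∈ T.E, f d e := by
    rw [NA_sum, cast_sum_sum_ite]
  have castNA' : (T.NA (insert e' A) : ZMod 2) = ∑ d ∈ T.E, ∑ e ∈ T.E, f' d e := by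
    rw [NA_sum, cast_sum_sum_ite]
  have castc1 : (cnt (T.SA A) w' : ZMod 2)
      = (if w < w' then 1 else 0) + ∑ e ∈ E', (if T.pk A e < w' then (1 : ZMod 2) else 0) := by
    rw [cnt_SA, cast_sum_ite, ← Finset.add_sum_erase _ _ he', T.pk_self heA]
  have castc2 : (cnt (T.SA (insert e' A)) w : ZMod 2)
      = (if w' < w then 1 else 0) + ∑ e ∈ E', (if T.pk A e < w then (1 : ZMod 2) else 0) := by
    rw [cnt_SA, cast_sum_ite, ← Finset.add_sum_erase _ _ he', T.pk_insert_self]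
    congr 1
    refine Finset.sum_congr rfl fun e he => ?_
    rw [hpkE' e he]
  have hsplit : ∀ g : Sym2 V → Sym2 V → ZMod 2, g e' e' = 0 →
      ∑ d ∈ T.E, ∑ e ∈ T.E, g d e
        = (∑ e ∈ E', g e' e) + (∑ d ∈ E', g d e') + ∑ d ∈ E', ∑ e ∈ E', g d e := by
    intro g hg
    rw [← Finset.add_sum_erase _ _ he', ← Finset.add_sum_erase _ (fun e => g e' e) he', hg,
      zero_add]
    have step : ∀ d ∈ E', ∑ e ∈ T.E, g d e = g d e' + ∑ e ∈ E', g d e := by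
      intro d _
      rw [← Finset.add_sum_erase _ _ he']
    rw [Finset.sum_congr rfl step, Finset.sum_add_distrib]
    ring
  have hfe : f e' e' = 0 := by rw [hf_def]; simp
  have hf'e : f' e' e' = 0 := by rw [hf'_def]; simp
  have hRR : ∑ d ∈ E', ∑ e ∈ E', f' d e = ∑ d ∈ E', ∑ e ∈ E', f d e := by
    refine Finset.sum_congr rfl fun d hd => Finset.sum_congr rfl fun e he => ?_
    simp only [hf_def, hf'_def, hpkE' d hd, hpkE' e he]
  have hG : ∀ d ∈ E',
      (f e' d + f' e' d) + (f d e' + f' d e')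
        + ((if T.pk A d < w' then (1 : ZMod 2) else 0)
          + (if T.pk A d < w then (1 : ZMod 2) else 0)) = 0 := by
    intro d hd
    have h1 : T.pk (insert e' A) e' = w' := T.pk_insert_self
    have h2 : T.pk A e' = w := T.pk_self heA
    have h3 := hpkE' d hd
    simp only [hf_def, hf'_def, h1, h2, h3]
    rcases (hkey d hd).lt_or_gt with hk | hk <;>
      rcases (hpw d hd).lt_or_gt with hp | hp <;>
        rcases (hpw' d hd).lt_or_gt with hq | hq <;>
          simp [← hw_def, ← hw'_def, hk, hp, hq, hk.asymm, hp.asymm, hq.asymm] <;> decide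
  rw [Nat.odd_iff, ← ZMod.val_natCast]
  have hcast : ((T.NA A + cnt (T.SA A) w'
      + (T.NA (insert e' A) + cnt (T.SA (insert e' A)) w) : ℕ) : ZMod 2) = 1 := by
    push_cast
    rw [castNA, castNA', castc1, castc2, hsplit f hfe, hsplit f' hf'e, hRR]
    have hGsum := Finset.sum_eq_zero hG
    simp only [Finset.sum_add_distrib] at hGsum
    have hww : (if w < w' then (1 : ZMod 2) else 0) + (if w' < w then 1 else 0) = 1 := by
      rcases ((T.hadj e' he'M).ne : w ≠ w').lt_or_gt with h | h
      · rw [if_pos h, if_neg h.asymm, add_zero]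
      · rw [if_neg h.asymm, if_pos h, zero_add]
    linear_combination hGsum + hww + zmod_two_add_self (∑ d ∈ E', ∑ e ∈ E', f d e)
  rw [hcast]
  rfl

end D2

end CMRegAux


namespace CMRegAux

section D3

variable {k : Type*} [Field k] {V : Type*} [Fintype V] [DecidableEq V] [LinearOrder V]
variable {G : SimpleGraph V} (T : MS V G)

lemma neg_one_pow_odd_sum (x y : ℕ) (h : Odd (x + y)) : (-1 : k) ^ x = -(-1 : k) ^ y := by
  have h2 : (-1 : k) ^ (x + y) = -1 := Odd.neg_one_pow h
  have h3 : (-1 : k) ^ y * (-1 : k) ^ y = 1 := by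
    rw [← pow_add]
    exact Even.neg_one_pow ⟨y, rfl⟩
  calc (-1 : k) ^ x = (-1 : k) ^ x * ((-1 : k) ^ y * (-1 : k) ^ y) := by rw [h3, mul_one]
    _ = ((-1 : k) ^ x * (-1 : k) ^ y) * (-1 : k) ^ y := by ring
    _ = ((-1 : k) ^ (x + y)) * (-1 : k) ^ y := by rw [pow_add]
    _ = -(-1 : k) ^ y := by rw [h2]; ring

namespace MS

lemma card_U₀ : T.U₀.card = T.M.card :=
  Finset.card_image_of_injOn (fun d hd e he h =>
    T.eq_of_mem_mem hd he (T.humem d hd) (h ▸ T.humem e he))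

lemma card_M (n : ℕ) (hn : T.E.card = n) : T.M.card = n + 1 := by
  rw [← hn, ← Finset.card_erase_add_one T.he₀]
  rfl

lemma uu_e₀_not_mem_coU : T.uu T.e₀ ∉ T.coU := by
  rw [coU, Finset.mem_image]
  rintro ⟨d, hd, h⟩
  rcases eq_or_ne d T.e₀ with rfl | hne
  · exact (T.hadj _ hd).ne' h
  · exact T.ne_of_edges hd T.he₀ hne (T.hvmem d hd) (T.humem _ T.he₀) h

lemma SA_empty : T.SA ∅ = T.E.image T.uu := by
  rw [SA]
  exact Finset.image_congr (fun d _ => if_neg (Finset.notMem_empty d))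

lemma U₀_eq : T.U₀ = insert (T.uu T.e₀) (T.SA ∅) := by
  rw [T.SA_empty, U₀, T.M_eq, Finset.image_insert]

lemma CS_empty : T.CS ∅ = insert (T.uu T.e₀) T.coU := by
  have h : T.E.image (T.ak ∅) = T.E.image T.vv :=
    Finset.image_congr (fun d _ => if_neg (Finset.notMem_empty d))
  rw [CS, h, coU, T.M_eq, Finset.image_insert]

lemma mem_coU_of_mem {e : Sym2 V} (he : e ∈ T.M) : T.vv e ∈ T.coU :=
  Finset.mem_image_of_mem _ he

lemma ak_mem_CS (A : Finset (Sym2 V)) {e' : Sym2 V} (he' : e' ∈ T.E) : T.ak A e' ∈ T.CS A := by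
  rw [CS]
  exact Finset.mem_insert_of_mem (Finset.mem_insert_of_mem
    (Finset.mem_image_of_mem _ he'))

end MS

/-- The chain whose Koszul boundary is our witness cycle. -/
def Ytil (k : Type*) [Field k] {V : Type*} [Fintype V] [DecidableEq V] [LinearOrder V]
    {G : SimpleGraph V} (T : MS V G) : Finset V → MvPolynomial V k :=
  fun U => if U = T.U₀ then xF k T.coU else 0

lemma X_mul_xF_coU_mem {a : V} (ha : a ∈ T.U₀) :
    X a * xF k T.coU ∈ edgeIdeal k G := by
  rw [MS.U₀, Finset.mem_image] at ha
  obtain ⟨e, he, rfl⟩ := ha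
  have hv : T.vv e ∈ T.coU := T.mem_coU_of_mem he
  have hx : xF k T.coU = X (T.vv e) * xF k (T.coU.erase (T.vv e)) := by
    rw [xF, xF, Finset.mul_prod_erase _ _ hv]
  rw [hx, ← mul_assoc]
  exact Ideal.mul_mem_right _ _ (Ideal.subset_span ⟨T.uu e, T.vv e, T.hadj e he, rfl⟩)

lemma zmem (n : ℕ) (hn : T.E.card = n) (S : Finset V) :
    DD (Ytil k T) S ∈ CMReg.degComp (edgeIdeal k G) (((2 * n + 2 : ℕ) : ℤ) - (n : ℕ)) := by
  rw [CMReg.degComp, if_pos (by push_cast; omega)]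
  have htn : ((((2 * n + 2 : ℕ) : ℤ) - (n : ℕ))).toNat = n + 2 := by omega
  rw [htn]
  apply Submodule.sum_mem
  intro a _
  apply Submodule.smul_mem
  rw [Ytil]
  split_ifs with h
  · refine Submodule.mem_inf.mpr ⟨?_, ?_⟩
    · rw [Submodule.restrictScalars_mem]
      refine X_mul_xF_coU_mem T ?_
      rw [← h]
      exact Finset.mem_insert_self a S
    · rw [mem_homogeneousSubmodule]
      have h2 : (X a * xF k T.coU).IsHomogeneous (1 + T.coU.card) :=
        (isHomogeneous_X k a).mul (isHomogeneous_xF T.coU)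
      rwa [T.card_coU, T.card_M n hn, show 1 + (n + 1) = n + 2 from by omega] at h2
  · rw [mul_zero]
    exact zero_mem _

/-- The witness cycle. -/
def zc (n : ℕ) (hn : T.E.card = n) : CMReg.KD (edgeIdeal k G) n (2 * n + 2) :=
  fun S => ⟨DD (Ytil k T) S.1, zmem T n hn S.1⟩

lemma DD_Ytil_zero_of_card (n : ℕ) (hn : T.E.card = n) (S : Finset V)
    (hS : S.card ≠ n) : DD (Ytil k T) S = 0 := by
  rw [DD]
  apply Finset.sum_eq_zero
  intro a ha
  rw [Ytil]
  rw [if_neg, mul_zero, smul_zero]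
  intro h
  have hc := congrArg Finset.card h
  rw [Finset.card_insert_of_notMem (Finset.mem_compl.mp ha), T.card_U₀, T.card_M n hn] at hc
  omega

lemma zc_cycle (n : ℕ) (hn : T.E.card = n) :
    zc T n hn ∈ CMReg.cyclesAt (edgeIdeal k G) n (2 * n + 2) := by
  cases n with
  | zero => exact Submodule.mem_top
  | succ m =>
    show _ ∈ LinearMap.ker (CMReg.kdiff (edgeIdeal k G) m (2 * (m + 1) + 2))
    rw [LinearMap.mem_ker]
    funext S
    apply Subtype.ext
    rw [kdiff_val]
    have hlift : liftF (edgeIdeal k G) m (2 * (m + 1) + 2) (zc T (m + 1) hn)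
        = DD (Ytil k T) := by
      funext T'
      rw [liftF]
      split_ifs with h
      · rfl
      · exact (DD_Ytil_zero_of_card T (m + 1) hn T' h).symm
    rw [hlift, DD_DD]
    rfl

/-- The detecting linear functional. -/
def phi (n : ℕ) (hn : T.E.card = n) : CMReg.KD (edgeIdeal k G) n (2 * n + 2) →ₗ[k] k where
  toFun h := ∑ A ∈ T.E.powerset, ((-1 : k) ^ T.NA A)
      * coeff (iexp (T.CS A)) (h ⟨T.SA A, by rw [T.card_SA, hn]⟩ : MvPolynomial V k)
  map_add' x y := by
    simp only [Pi.add_apply, Submodule.coe_add, coeff_add, mul_add]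
    rw [Finset.sum_add_distrib]
  map_smul' c x := by
    simp only [Pi.smul_apply, SetLike.val_smul, coeff_smul, RingHom.id_apply, smul_eq_mul,
      Finset.mul_sum]
    refine Finset.sum_congr rfl fun A _ => ?_
    ring

lemma zc_val (n : ℕ) (hn : T.E.card = n) (S : {S : Finset V // S.card = n}) :
    ((zc T n hn S : CMReg.degComp (edgeIdeal k G) (((2 * n + 2 : ℕ) : ℤ) - (n : ℕ))) :
      MvPolynomial V k) = DD (Ytil k T) S.1 := rfl

lemma phi_zc (n : ℕ) (hn : T.E.card = n) :
    phi T n hn (zc T n hn)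
      = ((-1 : k) ^ T.NA ∅) * ((-1 : k) ^ cnt (T.SA ∅) (T.uu T.e₀)) := by
  rw [phi]
  dsimp only [LinearMap.coe_mk, AddHom.coe_mk]
  rw [Finset.sum_eq_single_of_mem ∅ (Finset.empty_mem_powerset _)]
  · rw [zc_val, DD]
    rw [Finset.sum_eq_single_of_mem (T.uu T.e₀)
      (Finset.mem_compl.mpr (T.uu_e₀_not_mem_SA ∅))]
    · rw [Ytil, if_pos T.U₀_eq.symm]
      have hxf : X (T.uu T.e₀) * xF k T.coU = xF k (insert (T.uu T.e₀) T.coU) := by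
        rw [xF, xF, Finset.prod_insert T.uu_e₀_not_mem_coU]
      rw [hxf, coeff_smul, ← T.CS_empty, coeff_xF_self]
      rw [smul_eq_mul, mul_one]
    · intro a ha hne
      rw [Ytil, if_neg, mul_zero, smul_zero]
      intro h
      have hmem : a ∈ T.U₀ := by rw [← h]; exact Finset.mem_insert_self a _
      rw [T.U₀_eq, Finset.mem_insert] at hmem
      rcases hmem with h' | h'
      · exact hne h'
      · exact (Finset.mem_compl.mp ha) h'
  · intro A hA hne
    have hzero : DD (Ytil k T) (T.SA A) = 0 := by
      rw [DD]
      apply Finset.sum_eq_zero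
      intro a _
      rw [Ytil, if_neg, mul_zero, smul_zero]
      intro h
      obtain ⟨e'', he''⟩ := Finset.nonempty_iff_ne_empty.mpr hne
      have hAE : A ⊆ T.E := Finset.mem_powerset.mp hA
      have hvv : T.vv e'' ∈ T.SA A := by
        rw [MS.SA, Finset.mem_image]
        exact ⟨e'', hAE he'', if_pos he''⟩
      have hmem : T.vv e'' ∈ T.U₀ := by
        rw [← h]
        exact Finset.mem_insert_of_mem hvv
      rw [MS.U₀, Finset.mem_image] at hmem
      obtain ⟨d, hd, hde⟩ := hmem
      rcases eq_or_ne d e'' with rfl | hned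
      · exact (T.hadj d hd).ne hde
      · exact T.ne_of_edges hd (T.E_subset (hAE he'')) hned (T.humem d hd)
          (T.hvmem _ (T.E_subset (hAE he''))) hde
    rw [zc_val]
    dsimp only
    rw [hzero, coeff_zero, mul_zero]

end D3

end CMRegAux


namespace CMRegAux

section D4

variable {k : Type*} [Field k] {V : Type*} [Fintype V] [DecidableEq V] [LinearOrder V]
variable {G : SimpleGraph V} (T : MS V G)

namespace MS

lemma uu_e₀_mem_CS (A : Finset (Sym2 V)) : T.uu T.e₀ ∈ T.CS A :=
  Finset.mem_insert_self _ _

lemma vv_e₀_mem_CS_erase (A : Finset (Sym2 V)) :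
    T.vv T.e₀ ∈ (T.CS A).erase (T.uu T.e₀) := by
  rw [CS, Finset.erase_insert (T.uu_e₀_not_mem_insert A)]
  exact Finset.mem_insert_self _ _

lemma vv_e₀_mem_CS (A : Finset (Sym2 V)) : T.vv T.e₀ ∈ T.CS A :=
  Finset.mem_of_mem_erase (T.vv_e₀_mem_CS_erase A)

lemma CS_erase_uu (A : Finset (Sym2 V)) :
    (T.CS A).erase (T.uu T.e₀) = insert (T.vv T.e₀) (T.E.image (T.ak A)) := by
  rw [CS, Finset.erase_insert (T.uu_e₀_not_mem_insert A)]

lemma CS_erase_vv (A : Finset (Sym2 V)) :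
    (T.CS A).erase (T.vv T.e₀) = insert (T.uu T.e₀) (T.E.image (T.ak A)) := by
  rw [CS, Finset.erase_insert_of_ne T.uu_e₀_ne_vv_e₀,
    Finset.erase_insert (T.vv_e₀_not_mem_akimage A)]

lemma CS_erase_erase (A : Finset (Sym2 V)) :
    ((T.CS A).erase (T.uu T.e₀)).erase (T.vv T.e₀) = T.E.image (T.ak A) := by
  rw [T.CS_erase_uu A, Finset.erase_insert (T.vv_e₀_not_mem_akimage A)]

end MS

lemma coeff_vanish_transversal (A : Finset (Sym2 V)) (x₀ : V) (hx₀ : x₀ ∈ T.e₀)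
    {q : MvPolynomial V k} (hq : q ∈ edgeIdeal k G) :
    coeff (iexp (insert x₀ (T.E.image (T.ak A)))) q = 0 := by
  apply coeff_iexp_zero T
  · intro x hx
    rw [Finset.mem_insert] at hx
    rcases hx with rfl | hx
    · exact ⟨T.e₀, T.he₀, hx₀⟩
    · rw [Finset.mem_image] at hx
      obtain ⟨d, hd, rfl⟩ := hx
      exact ⟨d, T.E_subset hd, T.ak_mem A (T.E_subset hd)⟩
  · have hrep : ∀ x ∈ insert x₀ (T.E.image (T.ak A)), ∀ e ∈ T.M, x ∈ e →
        x = (if e = T.e₀ then x₀ else T.ak A e) := by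
      intro x hx e he hxe
      rw [Finset.mem_insert] at hx
      rcases hx with rfl | hx
      · rw [if_pos (T.eq_of_mem_mem he T.he₀ hxe hx₀)]
      · rw [Finset.mem_image] at hx
        obtain ⟨d, hd, rfl⟩ := hx
        have hed : e = d := T.eq_of_mem_mem he (T.E_subset hd) hxe (T.ak_mem A (T.E_subset hd))
        subst hed
        rw [if_neg (T.ne_e₀_of_mem_E hd)]
    intro e he x hx y hy hxe hye
    rw [hrep x hx e he hxe, hrep y hy e he hye]
  · exact hq

/-- The summand appearing in `phi` applied to a boundary. -/
def tpair (n : ℕ) (y : CMReg.KD (edgeIdeal k G) (n + 1) (2 * n + 2)) (A : Finset (Sym2 V))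
    (e' : Sym2 V) : k :=
  ((-1 : k) ^ (T.NA A + cnt (T.SA A) (T.ak A e')))
    * coeff (iexp ((T.CS A).erase (T.ak A e')))
        (liftF (edgeIdeal k G) n (2 * n + 2) y (insert (T.ak A e') (T.SA A)))

lemma tpair_cancel (n : ℕ) (y : CMReg.KD (edgeIdeal k G) (n + 1) (2 * n + 2))
    {A : Finset (Sym2 V)} {e' : Sym2 V} (he' : e' ∈ T.E) (heA : e' ∉ A) :
    tpair T n y A e' + tpair T n y (insert e' A) e' = 0 := by
  rw [tpair, tpair]
  have hsign : ((-1 : k) ^ (T.NA A + cnt (T.SA A) (T.ak A e')))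
      = -((-1 : k) ^ (T.NA (insert e' A) + cnt (T.SA (insert e' A)) (T.ak (insert e' A) e'))) := by
    rw [T.ak_self heA, T.ak_insert_self]
    exact neg_one_pow_odd_sum _ _ (parity T A he' heA)
  have hco : (T.CS A).erase (T.ak A e') = (T.CS (insert e' A)).erase (T.ak (insert e' A) e') := by
    rw [T.CS_erase_eq he' heA, T.CS_erase_insert_eq he']
  have hins : insert (T.ak A e') (T.SA A) = insert (T.ak (insert e' A) e') (T.SA (insert e' A)) :=
    T.insert_ak_SA_eq he' heA
  rw [hsign, hco, hins]
  ring

lemma phi_kdiff (n : ℕ) (hn : T.E.card = n)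
    (y : CMReg.KD (edgeIdeal k G) (n + 1) (2 * n + 2)) :
    phi T n hn (CMReg.kdiff (edgeIdeal k G) n (2 * n + 2) y) = 0 := by
  classical
  rw [phi]
  dsimp only [LinearMap.coe_mk, AddHom.coe_mk]
  have step1 : ∀ A ∈ T.E.powerset,
      ((-1 : k) ^ T.NA A) * coeff (iexp (T.CS A))
          ((CMReg.kdiff (edgeIdeal k G) n (2 * n + 2) y ⟨T.SA A, by rw [T.card_SA, hn]⟩ :
            CMReg.degComp (edgeIdeal k G) (((2 * n + 2 : ℕ) : ℤ) - (n : ℕ))) : MvPolynomial V k)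
        = ∑ e' ∈ T.E, tpair T n y A e' := by
    intro A _
    rw [kdiff_val, DD, coeff_sum, Finset.mul_sum]
    have hsubset : T.CS A ⊆ ((⟨T.SA A, by rw [T.card_SA, hn]⟩ :
        {S : Finset V // S.card = n}) : Finset V)ᶜ := T.CS_subset_compl A
    rw [← Finset.sum_subset hsubset ?vanish]
    case vanish =>
      intro a _ hnotCS
      rw [coeff_smul, smul_eq_mul, mul_comm (X a) _, coeff_mul_X', support_iexp, if_neg hnotCS,
        mul_zero, mul_zero]
    have hterm : ∀ a ∈ T.CS A,
        ((-1 : k) ^ T.NA A) * coeff (iexp (T.CS A))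
            (((-1 : k) ^ cnt (T.SA A) a) •
              (X a * liftF (edgeIdeal k G) n (2 * n + 2) y (insert a (T.SA A))))
          = ((-1 : k) ^ (T.NA A + cnt (T.SA A) a))
            * coeff (iexp ((T.CS A).erase a))
                (liftF (edgeIdeal k G) n (2 * n + 2) y (insert a (T.SA A))) := by
      intro a ha
      rw [coeff_smul, smul_eq_mul, mul_comm (X a) _, coeff_mul_X', support_iexp, if_pos ha,
        iexp_sub_single a _ ha, pow_add]
      ring
    rw [Finset.sum_congr rfl hterm]
    rw [← Finset.add_sum_erase _ _ (T.uu_e₀_mem_CS A),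
      ← Finset.add_sum_erase _ _ (T.vv_e₀_mem_CS_erase A)]
    have hzero_uu : ((-1 : k) ^ (T.NA A + cnt (T.SA A) (T.uu T.e₀)))
        * coeff (iexp ((T.CS A).erase (T.uu T.e₀)))
            (liftF (edgeIdeal k G) n (2 * n + 2) y (insert (T.uu T.e₀) (T.SA A))) = 0 := by
      rw [T.CS_erase_uu A, liftF]
      split_ifs with h
      · rw [coeff_vanish_transversal T A (T.vv T.e₀) (T.hvmem _ T.he₀)
          (mem_I_of_degComp (Submodule.coe_mem _)), mul_zero]
      · rw [coeff_zero, mul_zero]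
    have hzero_vv : ((-1 : k) ^ (T.NA A + cnt (T.SA A) (T.vv T.e₀)))
        * coeff (iexp ((T.CS A).erase (T.vv T.e₀)))
            (liftF (edgeIdeal k G) n (2 * n + 2) y (insert (T.vv T.e₀) (T.SA A))) = 0 := by
      rw [T.CS_erase_vv A, liftF]
      split_ifs with h
      · rw [coeff_vanish_transversal T A (T.uu T.e₀) (T.humem _ T.he₀)
          (mem_I_of_degComp (Submodule.coe_mem _)), mul_zero]
      · rw [coeff_zero, mul_zero]
    rw [hzero_uu, hzero_vv, zero_add, zero_add, T.CS_erase_erase A,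
      Finset.sum_image (fun d hd e he h => T.ak_injOn A d hd e he h)]
    rfl
  rw [Finset.sum_congr rfl step1, ← Finset.sum_product']
  refine Finset.sum_involution
    (fun p _ => (if p.2 ∈ p.1 then p.1.erase p.2 else insert p.2 p.1, p.2)) ?_ ?_ ?_ ?_
  · rintro ⟨A, e'⟩ hp
    rw [Finset.mem_product] at hp
    obtain ⟨hA, he'⟩ := hp
    by_cases hm : e' ∈ A
    · simp only [if_pos hm]
      have h := tpair_cancel T n y he' (Finset.notMem_erase e' A)
      rw [Finset.insert_erase hm] at h
      rw [add_comm]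
      exact h
    · simp only [if_neg hm]
      exact tpair_cancel T n y he' hm
  · rintro ⟨A, e'⟩ hp _
    intro h
    by_cases hm : e' ∈ A
    · simp only [if_pos hm] at h
      have := congrArg Prod.fst h
      simp only at this
      exact (Finset.erase_eq_self.mp this) hm
    · simp only [if_neg hm] at h
      have := congrArg Prod.fst h
      simp only at this
      exact hm (Finset.insert_eq_self.mp this)
  · rintro ⟨A, e'⟩ hp
    rw [Finset.mem_product] at hp ⊢
    obtain ⟨hA, he'⟩ := hp
    by_cases hm : e' ∈ A
    · simp only [if_pos hm]
      exact ⟨Finset.mem_powerset.mpr ((Finset.erase_subset _ _).trans (Finset.mem_powerset.mp hA)),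
        he'⟩
    · simp only [if_neg hm]
      exact ⟨Finset.mem_powerset.mpr
        (Finset.insert_subset he' (Finset.mem_powerset.mp hA)), he'⟩
  · rintro ⟨A, e'⟩ hp
    by_cases hm : e' ∈ A
    · simp only [if_pos hm, if_neg (Finset.notMem_erase e' A), Finset.insert_erase hm]
    · simp only [if_neg hm, if_pos (Finset.mem_insert_self e' A), Finset.erase_insert hm]

end D4

end CMRegAux


namespace CMRegAux

section E

variable {k : Type*} [Field k] {V : Type*} [Fintype V] [DecidableEq V] [LinearOrder V]
variable {G : SimpleGraph V} (T : MS V G)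

lemma betti_ne (n : ℕ) (hn : T.E.card = n) :
    CMReg.bettiNum (edgeIdeal k G) n (2 * n + 2) ≠ 0 := by
  have hBC := range_kdiff_le_cyclesAt (edgeIdeal k G) n (2 * n + 2)
  have hz := zc_cycle (k := k) T n hn
  have hznB : zc (k := k) T n hn
      ∉ LinearMap.range (CMReg.kdiff (edgeIdeal k G) n (2 * n + 2)) := by
    rintro ⟨y, hy⟩
    have h0 := phi_kdiff T n hn y
    rw [hy, phi_zc] at h0
    exact (mul_ne_zero (pow_ne_zero _ (neg_ne_zero.mpr one_ne_zero))
      (pow_ne_zero _ (neg_ne_zero.mpr one_ne_zero))) h0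
  have hlt : LinearMap.range (CMReg.kdiff (edgeIdeal k G) n (2 * n + 2))
      < CMReg.cyclesAt (edgeIdeal k G) n (2 * n + 2) :=
    lt_of_le_of_ne hBC (fun h => hznB (by rw [h]; exact hz))
  have hfr := Submodule.finrank_lt_finrank_of_lt hlt
  rw [CMReg.bettiNum]
  omega

end E

end CMRegAux

/-- For a graph `G` with at least one edge,
`reg I(G) ≥ inmat(G) + 1`. -/
theorem reg_edgeIdeal_ge_inducedMatchingNumber {k : Type*} [Field k] {V : Type*}
    [Fintype V] [DecidableEq V] [LinearOrder V] (G : SimpleGraph V)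
    (hE : G.edgeSet.Nonempty) :
    ((G.inducedMatchingNumber + 1 : ℕ) : ℕ∞) ≤ CMReg.reg (edgeIdeal k G) := by
  classical
  obtain ⟨e, he⟩ := hE
  obtain ⟨a, b, hab⟩ : ∃ a b : V, G.Adj a b := by
    revert he
    induction e using Sym2.ind with
    | _ x y =>
      intro he
      exact ⟨x, y, (G.mem_edgeSet).mp he⟩
  have hsingle : G.IsInducedMatching {s(a, b)} := by
    refine ⟨?_, ?_, ?_⟩
    · intro e' he'
      rw [Finset.coe_singleton, Set.mem_singleton_iff] at he'
      subst he'
      exact (G.mem_edgeSet).mpr hab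
    · intro e' he' f' hf' hne u _
      rw [Finset.mem_singleton] at he' hf'
      exact absurd (he'.trans hf'.symm) hne
    · rintro u v ⟨e', he', hu⟩ ⟨f', hf', hv⟩ huv
      rw [Finset.mem_singleton] at he' hf'
      subst he'; subst hf'
      rw [Sym2.mem_iff] at hu hv
      rw [Finset.mem_singleton]
      rcases hu with rfl | rfl <;> rcases hv with rfl | rfl
      · exact absurd rfl huv.ne
      · rfl
      · exact Sym2.eq_swap
      · exact absurd rfl huv.ne
  have hbdd : BddAbove {n : ℕ | ∃ M : Finset (Sym2 V), G.IsInducedMatching M ∧ M.card = n} := by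
    refine ⟨Fintype.card (Sym2 V), ?_⟩
    rintro n ⟨M, _, rfl⟩
    exact Finset.card_le_univ M
  have h1mem : (1 : ℕ) ∈ {n : ℕ | ∃ M : Finset (Sym2 V), G.IsInducedMatching M ∧ M.card = n} :=
    ⟨{s(a, b)}, hsingle, Finset.card_singleton _⟩
  have hmem : G.inducedMatchingNumber
      ∈ {n : ℕ | ∃ M : Finset (Sym2 V), G.IsInducedMatching M ∧ M.card = n} :=
    Nat.sSup_mem ⟨1, h1mem⟩ hbdd
  obtain ⟨M₀, hM₀, hcard⟩ := hmem
  have hg1 : 1 ≤ G.inducedMatchingNumber := le_csSup hbdd h1mem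
  obtain ⟨e₀, he₀⟩ : M₀.Nonempty := Finset.card_pos.mp (by omega)
  -- choose endpoints of each edge of the matching
  have hex : ∀ e : Sym2 V, e ∈ M₀ → ∃ p : V × V, G.Adj p.1 p.2 ∧ e = s(p.1, p.2) := by
    intro e
    induction e using Sym2.ind with
    | _ x y =>
      intro he'
      exact ⟨(x, y), (G.mem_edgeSet).mp (hM₀.1 (Finset.mem_coe.mpr he')), rfl⟩
  choose F hFadj hFmk using hex
  let F' : Sym2 V → V × V := fun e => if h : e ∈ M₀ then F e h else (a, a)
  have hF'eq : ∀ (e : Sym2 V) (he' : e ∈ M₀), F' e = F e he' := by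
    intro e he'
    simp only [F']
    rw [dif_pos he']
  have hF'adj : ∀ e ∈ M₀, G.Adj (F' e).1 (F' e).2 := by
    intro e he'
    rw [hF'eq e he']
    exact hFadj e he'
  have hF'mk : ∀ e ∈ M₀, e = s((F' e).1, (F' e).2) := by
    intro e he'
    rw [hF'eq e he']
    exact hFmk e he'
  let T : CMRegAux.MS V G :=
    { M := M₀
      e₀ := e₀
      he₀ := he₀
      uu := fun e => (F' e).1
      vv := fun e => (F' e).2
      hadj := hF'adj
      humem := fun e he' => by
        show (F' e).1 ∈ e
        nth_rewrite 1 [hF'mk e he']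
        exact Sym2.mem_mk_left _ _
      hvmem := fun e he' => by
        show (F' e).2 ∈ e
        nth_rewrite 1 [hF'mk e he']
        exact Sym2.mem_mk_right _ _
      hdisj := fun e he' f hf hne x hx => hM₀.2.1 e he' f hf hne x hx
      hind := hM₀.2.2 }
  set n : ℕ := T.E.card with hn_def
  have hn : T.E.card = n := rfl
  have hMn : M₀.card = n + 1 := T.card_M n hn
  have hinm : G.inducedMatchingNumber = n + 1 := by
    rw [← hcard]
    exact hMn
  have hbetti := CMRegAux.betti_ne (k := k) T n hn
  have hmemreg : ((G.inducedMatchingNumber + 1 : ℕ) : ℕ∞)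
      ∈ {d : ℕ∞ | ∃ i j : ℕ, CMReg.bettiNum (edgeIdeal k G) i j ≠ 0 ∧ ((j - i : ℕ) : ℕ∞) = d} := by
    refine ⟨n, 2 * n + 2, hbetti, ?_⟩
    congr 1
    omega
  exact le_sSup hmemreg
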